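/- arXiv:math/0505492 — 4 statements merged into one kernel-verified Lean document; each statement's English description precedes it below -/
import Mathlib

section
/- Suppose the probability measure μ satisfies a weak Poincaré inequality with nonincreasing β. Let F : ℝ^d → ℝ be L-Lipschitz with median m. Then for every integer k ≥ 1 and every s ∈ (0,1/4): μ(F − m > k) ≤ s/(1 + L²β(s)) + μ(F − m > k−1)·(1 − 1/(2(1 + L²β(s)))). -/
open MeasureTheory Set

noncomputable section

/-- Oscillation of a function: `sup f - inf f`. -/
def osc {α : Type*} (f : α → ℝ) : ℝ := sSup (Set.range f) - sInf (Set.range f)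

private lemma aux_div (s q D : ℝ) (hD : 0 < D) :
    (s + q * D - q/2) / D = s / D + q * (1 - 1 / (2 * D)) := by
  field_simp
  ring

theorem deviation_recursion {d : ℕ}
    (μ : Measure (EuclideanSpace ℝ (Fin d))) [IsProbabilityMeasure μ]
    (β : ℝ → ℝ) (hβ : Antitone β) (hβnonneg : ∀ s ∈ Set.Ioo (0:ℝ) (1/4), 0 ≤ β s)
    (hWP : ∀ f : EuclideanSpace ℝ (Fin d) → ℝ, LocallyLipschitz f →
      BddAbove (Set.range f) → BddBelow (Set.range f) →
      ∀ s ∈ Set.Ioo (0:ℝ) (1/4),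
        ∫ x, (f x)^2 ∂μ - (∫ x, f x ∂μ)^2 ≤
          β s * ∫ x, ‖fderiv ℝ f x‖^2 ∂μ + s * (osc f)^2)
    (L : NNReal) (F : EuclideanSpace ℝ (Fin d) → ℝ) (hF : LipschitzWith L F)
    (m : ℝ) (hm₁ : μ {x | m < F x} ≤ 1/2) (hm₂ : μ {x | F x < m} ≤ 1/2) :
    ∀ k : ℕ, 1 ≤ k → ∀ s ∈ Set.Ioo (0:ℝ) (1/4),
      (μ {x | (k : ℝ) < F x - m}).toReal ≤
        s / (1 + (L:ℝ)^2 * β s)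
        + (μ {x | (k : ℝ) - 1 < F x - m}).toReal
          * (1 - 1 / (2 * (1 + (L:ℝ)^2 * β s))) := by
  intro k hk s hs
  have hk1 : (1:ℝ) ≤ (k:ℝ) := by exact_mod_cast hk
  set A : Set (EuclideanSpace ℝ (Fin d)) := {x | (k:ℝ) - 1 < F x - m} with hA
  set B : Set (EuclideanSpace ℝ (Fin d)) := {x | (k:ℝ) < F x - m} with hB
  set c : ℝ := m + ((k:ℝ) - 1) with hc
  set f : EuclideanSpace ℝ (Fin d) → ℝ := fun x => min 1 (max (F x - c) 0) with hfdef
  -- basic pointwise facts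
  have hf0 : ∀ x, 0 ≤ f x := fun x => le_min zero_le_one (le_max_right _ _)
  have hf1 : ∀ x, f x ≤ 1 := fun x => min_le_left _ _
  have hfA : ∀ x, x ∉ A → f x = 0 := by
    intro x hx
    have : F x - m ≤ (k:ℝ) - 1 := not_lt.mp hx
    have h1 : F x - c ≤ 0 := by simp only [hc]; linarith
    simp [hfdef, max_eq_right h1, min_eq_right (zero_le_one)]
  have hfB : ∀ x, x ∈ B → f x = 1 := by
    intro x hx
    have : (k:ℝ) < F x - m := hx
    have h1 : (1:ℝ) ≤ F x - c := by simp only [hc]; linarith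
    have h2 : (1:ℝ) ≤ max (F x - c) 0 := le_trans h1 (le_max_left _ _)
    simp [hfdef, min_eq_left h2]
  -- Lipschitz
  have hsub : LipschitzWith L fun x => F x - c :=
    LipschitzWith.of_dist_le_mul fun x y => by
      have := hF.dist_le_mul x y
      simpa [Real.dist_eq, sub_sub_sub_cancel_right] using this
  have hLip : LipschitzWith L f := (hsub.max_const 0).const_min 1
  have hfc : Continuous f := hLip.continuous
  have hFc : Continuous F := hF.continuous
  -- measurability of sets
  have hA_meas : MeasurableSet A :=
    (isOpen_lt continuous_const (hFc.sub continuous_const)).measurableSet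
  have hB_meas : MeasurableSet B :=
    (isOpen_lt continuous_const (hFc.sub continuous_const)).measurableSet
  have hBA : B ⊆ A := by intro x hx; simp only [hB, mem_setOf_eq] at hx; simp only [hA, mem_setOf_eq]; linarith
  have hAm : A ⊆ {x | m < F x} := by
    intro x hx
    simp only [hA, mem_setOf_eq] at hx
    simp only [mem_setOf_eq]
    linarith
  set p : ℝ := (μ B).toReal with hp
  set q : ℝ := (μ A).toReal with hq
  have hq_half : q ≤ 1/2 := by
    have h1 : μ A ≤ 1/2 := le_trans (measure_mono hAm) hm₁
    have := ENNReal.toReal_mono (by norm_num) h1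
    simpa using this
  have hq_nonneg : 0 ≤ q := ENNReal.toReal_nonneg
  have hp_nonneg : 0 ≤ p := ENNReal.toReal_nonneg
  -- integrability
  have hf_int : Integrable f μ := by
    refine Integrable.mono' (integrable_const (1:ℝ)) hfc.aestronglyMeasurable ?_
    filter_upwards with x
    rw [Real.norm_eq_abs, abs_le]
    exact ⟨by linarith [hf0 x], hf1 x⟩
  have hf2_int : Integrable (fun x => (f x)^2) μ := by
    refine Integrable.mono' (integrable_const (1:ℝ)) ((hfc.pow 2).aestronglyMeasurable) ?_
    filter_upwards with x
    rw [Real.norm_eq_abs, abs_le]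
    constructor
    · nlinarith [hf0 x, hf1 x]
    · nlinarith [hf0 x, hf1 x]
  -- ∫ f ≤ q
  have h_intf_le : ∫ x, f x ∂μ ≤ q := by
    have hind : Integrable (A.indicator fun _ => (1:ℝ)) μ :=
      (integrable_const (1:ℝ)).indicator hA_meas
    have hmono : ∫ x, f x ∂μ ≤ ∫ x, A.indicator (fun _ => (1:ℝ)) x ∂μ := by
      refine integral_mono hf_int hind ?_
      intro x
      by_cases hx : x ∈ A
      · simp [Set.indicator_of_mem hx, hf1 x]
      · simp [Set.indicator_of_notMem hx, hfA x hx]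
    rw [integral_indicator_const (1:ℝ) hA_meas] at hmono
    simpa [hq, measureReal_def] using hmono
  have h_intf_nonneg : 0 ≤ ∫ x, f x ∂μ := integral_nonneg hf0
  have h_intf_half : ∫ x, f x ∂μ ≤ 1/2 := le_trans h_intf_le hq_half
  -- p ≤ ∫ f²
  have h_intf2_ge : p ≤ ∫ x, (f x)^2 ∂μ := by
    have hind : Integrable (B.indicator fun _ => (1:ℝ)) μ :=
      (integrable_const (1:ℝ)).indicator hB_meas
    have hmono : ∫ x, B.indicator (fun _ => (1:ℝ)) x ∂μ ≤ ∫ x, (f x)^2 ∂μ := by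
      refine integral_mono hind hf2_int ?_
      intro x
      by_cases hx : x ∈ B
      · simp [Set.indicator_of_mem hx, hfB x hx]
      · simp only [Set.indicator_of_notMem hx]
        positivity
    rw [integral_indicator_const (1:ℝ) hB_meas] at hmono
    simpa [hp, measureReal_def] using hmono
  -- gradient bound
  have hg_meas : Measurable fun x => ‖fderiv ℝ f x‖^2 :=
    ((measurable_fderiv ℝ f).norm).pow_const 2
  have hgb : ∀ x, ‖fderiv ℝ f x‖^2 ≤ (A \ B).indicator (fun _ => ((L:ℝ))^2) x := by
    intro x
    by_cases hxA : x ∈ A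
    · by_cases hxB : x ∈ B
      · have hmax : IsLocalMax f x := Filter.Eventually.of_forall fun y => by
          rw [hfB x hxB]; exact hf1 y
        rw [hmax.fderiv_eq_zero]
        have : x ∉ A \ B := fun h => h.2 hxB
        simp [Set.indicator_of_notMem this]
      · have hxd : x ∈ A \ B := ⟨hxA, hxB⟩
        rw [Set.indicator_of_mem hxd]
        have hle : ‖fderiv ℝ f x‖ ≤ (L:ℝ) := norm_fderiv_le_of_lipschitz ℝ hLip
        exact pow_le_pow_left₀ (norm_nonneg _) hle 2
    · have hmin : IsLocalMin f x := Filter.Eventually.of_forall fun y => by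
        rw [hfA x hxA]; exact hf0 y
      rw [hmin.fderiv_eq_zero]
      have : x ∉ A \ B := fun h => hxA h.1
      simp [Set.indicator_of_notMem this]
  have hAB_meas : MeasurableSet (A \ B) := hA_meas.diff hB_meas
  have hdiff : (μ (A \ B)).toReal = q - p := by
    rw [measure_diff hBA hB_meas.nullMeasurableSet (measure_ne_top μ B)]
    exact ENNReal.toReal_sub_of_le (measure_mono hBA) (measure_ne_top μ A)
  have h_intg_le : ∫ x, ‖fderiv ℝ f x‖^2 ∂μ ≤ (L:ℝ)^2 * (q - p) := by
    have hind : Integrable ((A \ B).indicator fun _ => ((L:ℝ))^2) μ :=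
      (integrable_const _).indicator hAB_meas
    have hmono : ∫ x, ‖fderiv ℝ f x‖^2 ∂μ ≤ ∫ x, (A \ B).indicator (fun _ => ((L:ℝ))^2) x ∂μ := by
      refine integral_mono_of_nonneg ?_ hind ?_
      · filter_upwards with x; positivity
      · filter_upwards with x using hgb x
    rw [integral_indicator_const _ hAB_meas] at hmono
    rw [smul_eq_mul, measureReal_def, hdiff] at hmono
    linarith [hmono]
  -- oscillation
  have hne : (Set.range f).Nonempty := Set.range_nonempty f
  have hbdd_above : BddAbove (Set.range f) := by
    refine ⟨1, ?_⟩; rintro _ ⟨x, rfl⟩; exact hf1 x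
  have hbdd_below : BddBelow (Set.range f) := by
    refine ⟨0, ?_⟩; rintro _ ⟨x, rfl⟩; exact hf0 x
  have hosc_le : osc f ≤ 1 := by
    have h1 : sSup (Set.range f) ≤ 1 := csSup_le hne (by rintro _ ⟨x, rfl⟩; exact hf1 x)
    have h2 : (0:ℝ) ≤ sInf (Set.range f) := le_csInf hne (by rintro _ ⟨x, rfl⟩; exact hf0 x)
    simp only [osc]; linarith
  have hosc_nonneg : 0 ≤ osc f := by
    have := csInf_le_csSup hne hbdd_below hbdd_above
    simp only [osc]; linarith
  -- weak Poincaré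
  have hWPf := hWP f hLip.locallyLipschitz hbdd_above hbdd_below s hs
  have hβs : 0 ≤ β s := hβnonneg s hs
  have hkey : p - q/2 ≤ (L:ℝ)^2 * β s * (q - p) + s := by
    have hvar : p - q/2 ≤ ∫ x, (f x)^2 ∂μ - (∫ x, f x ∂μ)^2 := by
      have hsq : (∫ x, f x ∂μ)^2 ≤ q * (1/2) := by
        rw [sq]
        exact mul_le_mul h_intf_le h_intf_half h_intf_nonneg hq_nonneg
      nlinarith [h_intf2_ge]
    have hrhs : β s * ∫ x, ‖fderiv ℝ f x‖^2 ∂μ + s * (osc f)^2 ≤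
        (L:ℝ)^2 * β s * (q - p) + s := by
      have h1 : β s * ∫ x, ‖fderiv ℝ f x‖^2 ∂μ ≤ β s * ((L:ℝ)^2 * (q - p)) :=
        mul_le_mul_of_nonneg_left h_intg_le hβs
      have h2 : s * (osc f)^2 ≤ s * 1 := by
        refine mul_le_mul_of_nonneg_left ?_ (le_of_lt hs.1)
        nlinarith
      nlinarith
    linarith [hWPf]
  -- final algebra
  set C : ℝ := (L:ℝ)^2 * β s with hC
  have hC_nonneg : 0 ≤ C := mul_nonneg (sq_nonneg _) hβs
  have hD : (0:ℝ) < 1 + C := by linarith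
  have h2 : p * (1 + C) ≤ s + q * (1 + C) - q/2 := by linarith [hkey]
  have h3 : p ≤ (s + q * (1 + C) - q/2) / (1 + C) := (le_div_iff₀ hD).mpr h2
  have h4 : (s + q * (1 + C) - q/2) / (1 + C) =
      s / (1 + C) + q * (1 - 1 / (2 * (1 + C))) := aux_div s q (1 + C) hD
  rw [h4] at h3
  exact h3
end
end

section
/- Suppose μ satisfies a weak Poincaré inequality with nonincreasing β, and F : ℝ^d → ℝ is L-Lipschitz with median m. Then for every integer k ≥ 1 and s ∈ (0,1/4): μ(F − m > k) ≤ 2s + (√e/2) exp( −k/(4L√β(s)) ). -/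
open MeasureTheory Set

noncomputable section

lemma integrable_of_bdd {Ω : Type*} [MeasurableSpace Ω] {μ : Measure Ω} [IsFiniteMeasure μ]
    {f : Ω → ℝ} (hf : Measurable f) {C : ℝ} (hC : ∀ x, |f x| ≤ C) : Integrable f μ :=
  (integrable_const C).mono' hf.aestronglyMeasurable
    (Filter.Eventually.of_forall (by simpa using hC))

/-- Cauchy–Schwarz with support control. -/
lemma sq_integral_le {Ω : Type*} [MeasurableSpace Ω] (μ : Measure Ω) [IsProbabilityMeasure μ]
    {g : Ω → ℝ} {S : Set Ω} (hg : Measurable g) (hS : MeasurableSet S)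
    (hg0 : ∀ z, 0 ≤ g z) (hg1 : ∀ z, g z ≤ 1) (hsupp : ∀ z, z ∉ S → g z = 0) :
    (∫ z, g z ∂μ)^2 ≤ (μ S).toReal * ∫ z, (g z)^2 ∂μ := by
  have hgb : ∀ z, |g z| ≤ 1 := fun z => abs_le.mpr ⟨by linarith [hg0 z], hg1 z⟩
  have hIg : Integrable g μ := integrable_of_bdd hg hgb
  have hIg2 : Integrable (fun z => (g z)^2) μ := by
    refine integrable_of_bdd (hg.pow_const 2) (C := 1) (fun z => ?_)
    have := hgb z
    rw [abs_pow]
    calc |g z|^2 ≤ 1^2 := by nlinarith [abs_nonneg (g z)]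
    _ = 1 := by norm_num
  set χ : Ω → ℝ := S.indicator (fun _ => (1:ℝ)) with hχ
  have hIχ : Integrable χ μ := (integrable_const (1:ℝ)).indicator hS
  have hP : ∫ z, χ z ∂μ = (μ S).toReal := by
    rw [hχ, integral_indicator_const (1:ℝ) hS]; simp; rfl
  set Q := ∫ z, (g z)^2 ∂μ with hQdef
  set I := ∫ z, g z ∂μ with hIdef
  have hQ0 : 0 ≤ Q := integral_nonneg (fun z => sq_nonneg _)
  rcases eq_or_lt_of_le hQ0 with hQz | hQpos
  · -- Q = 0 : g = 0 a.e.
    have hg2ae : (fun z => (g z)^2) =ᵐ[μ] 0 :=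
      (integral_eq_zero_iff_of_nonneg (fun z => sq_nonneg _) hIg2).mp hQz.symm
    have hgae : g =ᵐ[μ] 0 := by
      filter_upwards [hg2ae] with z hz
      have : (g z)^2 = 0 := hz
      exact pow_eq_zero_iff (by norm_num) |>.mp this
    have hI0 : I = 0 := by
      rw [hIdef, integral_congr_ae hgae]; simp
    rw [hI0]
    have : 0 ≤ (μ S).toReal * Q := mul_nonneg ENNReal.toReal_nonneg hQ0
    simpa using this
  · -- expansion of ∫ (χ - (I/Q) g)^2 ≥ 0
    set t := I / Q with ht
    have hpt : ∀ z, (χ z - t * g z)^2 = χ z - (2*t) * g z + t^2 * (g z)^2 := by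
      intro z
      by_cases hz : z ∈ S
      · simp only [hχ, indicator_of_mem hz]
        ring
      · simp only [hχ, indicator_of_notMem hz, hsupp z hz]
        ring
    have hnn : 0 ≤ ∫ z, (χ z - t * g z)^2 ∂μ := integral_nonneg (fun z => sq_nonneg _)
    have hsplit : ∫ z, (χ z - t * g z)^2 ∂μ = (μ S).toReal - (2*t) * I + t^2 * Q := by
      calc ∫ z, (χ z - t * g z)^2 ∂μ
          = ∫ z, (χ z - (2*t) * g z + t^2 * (g z)^2) ∂μ := by
            exact integral_congr_ae (Filter.Eventually.of_forall hpt)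
        _ = ∫ z, (χ z - (2*t) * g z) ∂μ + ∫ z, t^2 * (g z)^2 ∂μ := by
            exact integral_add ((hIχ.sub (hIg.const_mul (2*t)))) (hIg2.const_mul _)
        _ = (∫ z, χ z ∂μ) - (∫ z, (2*t) * g z ∂μ) + t^2 * Q := by
            rw [integral_sub hIχ (hIg.const_mul (2*t)), integral_const_mul, integral_const_mul]
        _ = (μ S).toReal - (2*t) * I + t^2 * Q := by
            rw [hP, integral_const_mul]
    have hkey : 0 ≤ (μ S).toReal - (2*t) * I + t^2 * Q := hsplit ▸ hnn
    have ht2 : (2*t)*I - t^2*Q = I^2/Q := by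
      rw [ht]; field_simp; ring
    have : I^2/Q ≤ (μ S).toReal := by linarith [hkey, ht2]
    calc I^2 = (I^2/Q) * Q := by field_simp
    _ ≤ (μ S).toReal * Q := mul_le_mul_of_nonneg_right this hQ0



lemma ustep {x q rr rr' s : ℝ} (hx0 : 0 < x) (hx1 : x < 1) (hs : s = (1 - x^2)/4)
    (hq : 0 < q) (hr : rr ≤ 1/2) (hr'0 : 0 ≤ rr')
    (h : rr' * (1 - rr + q/2) ≤ q/2 * rr + s) :
    (rr' - (1-x)/2) / ((1+x)/2 - rr') ≤ (1-x+q)/(1+x+q) * ((rr - (1-x)/2) / ((1+x)/2 - rr)) := by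
  have hd1 : 0 < (1+x)/2 - rr := by linarith
  have hD : (0:ℝ) < 1 - rr + q/2 := by linarith
  have h2 : q/2*rr + s < (1+x)/2 * (1 - rr + q/2) := by
    nlinarith [mul_nonneg (show (0:ℝ) ≤ 1/2 - rr by linarith)
      (show (0:ℝ) ≤ (1+x)/2 + q/2 by linarith), mul_pos hx0 hq,
      mul_pos hx0 (show (0:ℝ) < 1+x by linarith)]
  have hr' : rr' < (1+x)/2 := by
    by_contra hcon
    push_neg at hcon
    have : (1+x)/2 * (1 - rr + q/2) ≤ rr' * (1 - rr + q/2) :=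
      mul_le_mul_of_nonneg_right hcon hD.le
    linarith
  have hd2 : 0 < (1+x)/2 - rr' := by linarith
  have iden : (1 - rr + q/2) * ( ((1-x)/2 + q/2) * ((rr - (1-x)/2) * ((1+x)/2 - rr'))
      - (rr' - (1-x)/2) * (((1+x)/2 - rr) * ((1+x)/2 + q/2)) )
      = x * (1 + q/2 - rr) * (q/2*rr + s - rr'*(1 - rr + q/2)) := by
    rw [hs]; ring
  have hx3 : 0 ≤ x * (1 + q/2 - rr) * (q/2*rr + s - rr'*(1 - rr + q/2)) :=
    mul_nonneg (mul_nonneg hx0.le (by linarith)) (by linarith)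
  have h4 : 0 ≤ (1 - rr + q/2) * ( ((1-x)/2 + q/2) * ((rr - (1-x)/2) * ((1+x)/2 - rr'))
      - (rr' - (1-x)/2) * (((1+x)/2 - rr) * ((1+x)/2 + q/2)) ) := by rw [iden]; exact hx3
  have key : (rr' - (1-x)/2) * (((1+x)/2 - rr) * ((1+x)/2 + q/2))
      ≤ ((1-x)/2 + q/2) * ((rr - (1-x)/2) * ((1+x)/2 - rr')) := by
    nlinarith [h4, hD]
  rw [div_mul_div_comm]
  rw [div_le_div_iff₀ hd2 (mul_pos (show (0:ℝ) < 1+x+q by linarith) hd1)]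
  nlinarith [key]

-- conversion lemmas
lemma conv_branch1 {x rr s : ℝ} (hx0 : 0 < x) (hx1 : x < 1) (hs : s = (1 - x^2)/4)
    (hr : rr ≤ 1/2)
    (h : (rr - (1-x)/2) / ((1+x)/2 - rr) ≤ (1-x)/(1+x)) : rr ≤ 2*s := by
  have hd : 0 < (1+x)/2 - rr := by linarith
  rw [div_le_div_iff₀ hd (show (0:ℝ) < 1+x by linarith)] at h
  nlinarith [h]

lemma conv_branch2 {x rr s T : ℝ} (hx0 : 0 < x) (hx1 : x < 1) (hs : s = (1 - x^2)/4)
    (hr : rr ≤ 1/2) (hr0 : 0 ≤ rr) (hT : 0 < T)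
    (h : (rr - (1-x)/2) / ((1+x)/2 - rr) ≤ T) : rr ≤ 2*s + T := by
  have hd : 0 < (1+x)/2 - rr := by linarith
  rw [div_le_iff₀ hd] at h
  nlinarith [h, mul_nonneg hT.le (show (0:ℝ) ≤ (1-x)/2 + rr by linarith),
    mul_nonneg hx0.le (show (0:ℝ) ≤ 1 - x by linarith)]

lemma cubic_bound {x q : ℝ} (hx0 : 0 < x) (hx1 : x < 1) (hq : 0 < q) (hq23 : q ≤ 2/3)
    (hxx : 1 - x^2 ≥ 4/9) :
    ((1-x+q)/(1+x+q))^3 ≤ (1-x)/(1+x) := by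
  have h1 : (0:ℝ) < 1+x+q := by linarith
  have h2 : (0:ℝ) < 1+x := by linarith
  rw [div_pow, div_le_div_iff₀ (by positivity) h2]
  have iden : (1-x)*(1+x+q)^3 - (1-x+q)^3*(1+x) = 2*x*((1-x^2)*(3*q+2) - q^3) := by ring
  have h3 : q^3 ≤ (1-x^2)*(3*q+2) := by nlinarith [mul_nonneg hq.le hq.le]
  nlinarith [iden, mul_nonneg hx0.le (sub_nonneg.mpr h3)]

lemma core_step {d : ℕ} (μ : Measure (EuclideanSpace ℝ (Fin d))) [IsProbabilityMeasure μ]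
    (βs L s : ℝ) (hβ : 0 < βs) (hL : 0 < L)
    (F : EuclideanSpace ℝ (Fin d) → ℝ) (hF : LipschitzWith (Real.toNNReal L) F) (m : ℝ)
    (hWP1 : ∀ f : EuclideanSpace ℝ (Fin d) → ℝ, LocallyLipschitz f →
      BddAbove (Set.range f) → BddBelow (Set.range f) →
        ∫ x, (f x)^2 ∂μ - (∫ x, f x ∂μ)^2 ≤
          βs * ∫ x, ‖fderiv ℝ f x‖^2 ∂μ + s * (osc f)^2)
    (hs : 0 < s)
    {a bb c : ℝ} (ha : 0 < a) (hab : a < bb) (hbc : bb < c) :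
    (μ {x | c ≤ F x - m}).toReal * (1 - (μ {x | a ≤ F x - m}).toReal) ≤
      βs * (L/(bb - a))^2 * ((μ {x | a ≤ F x - m}).toReal - (μ {x | c ≤ F x - m}).toReal) + s := by
  have hFc : Continuous F := hF.continuous
  have hFm : Measurable (fun x => F x - m) := (hFc.measurable).sub measurable_const
  have hba : (0:ℝ) < bb - a := by linarith
  set c0 : ℝ := L / (bb - a) with hc0
  have hc0pos : 0 < c0 := div_pos hL hba
  -- test function
  set g : EuclideanSpace ℝ (Fin d) → ℝ :=
    fun z => min 1 (max 0 ((F z - m - a)/(bb - a))) with hgdef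
  have hg0 : ∀ z, 0 ≤ g z := fun z => le_min zero_le_one (le_max_left _ _)
  have hg1 : ∀ z, g z ≤ 1 := fun z => min_le_left _ _
  have hgb : ∀ z, |g z| ≤ 1 := fun z => abs_le.mpr ⟨by linarith [hg0 z], hg1 z⟩
  -- Lipschitz
  have hlin : LipschitzWith (Real.toNNReal c0) (fun z => (F z - m - a)/(bb - a)) := by
    apply LipschitzWith.of_dist_le_mul
    intro z w
    rw [Real.dist_eq]
    have h1 : (F z - m - a)/(bb-a) - (F w - m - a)/(bb-a) = (F z - F w)/(bb - a) := by ring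
    rw [h1, abs_div, abs_of_pos hba]
    rw [Real.coe_toNNReal _ hc0pos.le, hc0, div_mul_eq_mul_div, div_le_div_iff_of_pos_right hba]
    have := hF.dist_le_mul z w
    rw [Real.dist_eq, Real.coe_toNNReal _ hL.le] at this
    exact this
  have hglip : LipschitzWith (Real.toNNReal c0) g := by
    have := (hlin.const_max 0).const_min 1
    exact this
  have hgm : Measurable g := hglip.continuous.measurable
  -- zero value below a
  have hgzero : ∀ z, F z - m ≤ a → g z = 0 := by
    intro z hz
    have h1 : (F z - m - a)/(bb-a) ≤ 0 :=
      div_nonpos_iff.mpr (Or.inr ⟨by linarith, hba.le⟩)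
    simp [hgdef, max_eq_left h1]
  have hgone : ∀ z, bb ≤ F z - m → g z = 1 := by
    intro z hz
    have h1 : (1:ℝ) ≤ (F z - m - a)/(bb-a) := by
      rw [le_div_iff₀ hba]; linarith
    have h2 : (1:ℝ) ≤ max 0 ((F z - m - a)/(bb-a)) := le_trans h1 (le_max_right _ _)
    simp [hgdef, min_eq_left h2]
  -- sets
  set Sa : Set (EuclideanSpace ℝ (Fin d)) := {x | a ≤ F x - m} with hSa
  set Sc : Set (EuclideanSpace ℝ (Fin d)) := {x | c ≤ F x - m} with hSc
  set D : Set (EuclideanSpace ℝ (Fin d)) := {x | a ≤ F x - m ∧ F x - m ≤ bb} with hD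
  have hSam : MeasurableSet Sa := hFm measurableSet_Ici
  have hScm : MeasurableSet Sc := hFm measurableSet_Ici
  have hDm : MeasurableSet D := (hFm measurableSet_Ici).inter (hFm measurableSet_Iic)
  -- fderiv bound
  have hder : ∀ z, ‖fderiv ℝ g z‖^2 ≤ c0^2 * D.indicator (fun _ => (1:ℝ)) z := by
    intro z
    rcases lt_or_ge (F z - m) a with hz | hz
    · have hU : IsOpen {w : EuclideanSpace ℝ (Fin d) | F w - m < a} :=
        isOpen_lt (hFc.sub continuous_const) continuous_const
      have hev : g =ᶠ[nhds z] (fun _ => (0:ℝ)) := by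
        filter_upwards [hU.mem_nhds hz] with w hw
        exact hgzero w (le_of_lt hw)
      rw [hev.fderiv_eq, fderiv_fun_const]
      simp only [Pi.zero_apply, norm_zero]
      have : (0:ℝ) ≤ c0^2 * D.indicator (fun _ => (1:ℝ)) z := by
        apply mul_nonneg (sq_nonneg _)
        exact Set.indicator_nonneg (fun _ _ => zero_le_one) z
      simpa using this
    · rcases lt_or_ge bb (F z - m) with hz2 | hz2
      · have hU : IsOpen {w : EuclideanSpace ℝ (Fin d) | bb < F w - m} :=
          isOpen_lt continuous_const (hFc.sub continuous_const)
        have hev : g =ᶠ[nhds z] (fun _ => (1:ℝ)) := by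
          filter_upwards [hU.mem_nhds hz2] with w hw
          exact hgone w hw.le
        rw [hev.fderiv_eq, fderiv_fun_const]
        simp only [Pi.zero_apply, norm_zero]
        have : (0:ℝ) ≤ c0^2 * D.indicator (fun _ => (1:ℝ)) z := by
          apply mul_nonneg (sq_nonneg _)
          exact Set.indicator_nonneg (fun _ _ => zero_le_one) z
        simpa using this
      · have hzD : z ∈ D := ⟨hz, hz2⟩
        rw [Set.indicator_of_mem hzD]
        have h1 : ‖fderiv ℝ g z‖ ≤ c0 := by
          have := norm_fderiv_le_of_lipschitz ℝ hglip (x₀ := z)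
          rwa [Real.coe_toNNReal _ hc0pos.le] at this
        have h2 : (0:ℝ) ≤ ‖fderiv ℝ g z‖ := norm_nonneg _
        nlinarith
  -- integral of fderiv
  have hnd : Integrable (fun z => ‖fderiv ℝ g z‖^2) μ := by
    refine integrable_of_bdd (((measurable_fderiv ℝ g).norm).pow_const 2) (C := c0^2) ?_
    intro z
    rw [abs_of_nonneg (by positivity)]
    calc ‖fderiv ℝ g z‖^2 ≤ c0^2 * D.indicator (fun _ => (1:ℝ)) z := hder z
    _ ≤ c0^2 * 1 := by
        apply mul_le_mul_of_nonneg_left _ (sq_nonneg _)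
        by_cases hz : z ∈ D <;> simp [hz]
    _ = c0^2 := by ring
  have hIind : Integrable (fun z => c0^2 * D.indicator (fun _ => (1:ℝ)) z) μ :=
    (((integrable_const (1:ℝ)).indicator hDm)).const_mul _
  have hG : ∫ z, ‖fderiv ℝ g z‖^2 ∂μ ≤ c0^2 * (μ D).toReal := by
    calc ∫ z, ‖fderiv ℝ g z‖^2 ∂μ ≤ ∫ z, c0^2 * D.indicator (fun _ => (1:ℝ)) z ∂μ :=
      integral_mono hnd hIind hder
    _ = c0^2 * ∫ z, D.indicator (fun _ => (1:ℝ)) z ∂μ := integral_const_mul _ _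
    _ = c0^2 * (μ D).toReal := by rw [integral_indicator_const (1:ℝ) hDm]; simp; exact Or.inl rfl
  -- measure of D
  have hDmeas : (μ D).toReal ≤ (μ Sa).toReal - (μ Sc).toReal := by
    have hdisj : Disjoint D Sc := by
      rw [Set.disjoint_left]
      rintro z ⟨hz1, hz2⟩ hz3
      have : c ≤ F z - m := hz3
      linarith
    have hsub : D ∪ Sc ⊆ Sa := by
      rintro z (⟨hz1, _⟩ | hz)
      · exact hz1
      · have : c ≤ F z - m := hz
        show a ≤ F z - m
        linarith
    have h1 : μ D + μ Sc ≤ μ Sa := by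
      rw [← measure_union hdisj hScm]
      exact measure_mono hsub
    have h2 := ENNReal.toReal_mono (measure_ne_top μ Sa) h1
    rw [ENNReal.toReal_add (measure_ne_top μ D) (measure_ne_top μ Sc)] at h2
    linarith
  -- osc
  have hrange_ne : (Set.range g).Nonempty := Set.range_nonempty _
  have hbdda : BddAbove (Set.range g) := ⟨1, by rintro _ ⟨z, rfl⟩; exact hg1 z⟩
  have hbddb : BddBelow (Set.range g) := ⟨0, by rintro _ ⟨z, rfl⟩; exact hg0 z⟩
  have hosc1 : osc g ≤ 1 := by
    have h1 : sSup (Set.range g) ≤ 1 := csSup_le hrange_ne (by rintro _ ⟨z, rfl⟩; exact hg1 z)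
    have h2 : (0:ℝ) ≤ sInf (Set.range g) := le_csInf hrange_ne (by rintro _ ⟨z, rfl⟩; exact hg0 z)
    unfold osc; linarith
  have hosc0 : 0 ≤ osc g := by
    have := csInf_le_csSup hrange_ne hbddb hbdda
    unfold osc; linarith
  have hosc_sq : (osc g)^2 ≤ 1 := by nlinarith
  -- integrals of g
  have hIg : Integrable g μ := integrable_of_bdd hgm hgb
  have hIg2 : Integrable (fun z => (g z)^2) μ := by
    refine integrable_of_bdd (hgm.pow_const 2) (C := 1) (fun z => ?_)
    rw [abs_pow]
    nlinarith [hgb z, abs_nonneg (g z)]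
  have hQc : (μ Sc).toReal ≤ ∫ z, (g z)^2 ∂μ := by
    have hpt : ∀ z, Sc.indicator (fun _ => (1:ℝ)) z ≤ (g z)^2 := by
      intro z
      by_cases hz : z ∈ Sc
      · rw [Set.indicator_of_mem hz]
        have : g z = 1 := hgone z (by have : c ≤ F z - m := hz; linarith)
        rw [this]; norm_num
      · rw [Set.indicator_of_notMem hz]
        exact sq_nonneg _
    calc (μ Sc).toReal = ∫ z, Sc.indicator (fun _ => (1:ℝ)) z ∂μ := by
          rw [integral_indicator_const (1:ℝ) hScm]; simp; rfl
    _ ≤ ∫ z, (g z)^2 ∂μ := integral_mono ((integrable_const (1:ℝ)).indicator hScm) hIg2 hpt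
  -- Cauchy-Schwarz with support Sa' := {a < F x - m} ⊆ Sa
  have hCS : (∫ z, g z ∂μ)^2 ≤ (μ Sa).toReal * ∫ z, (g z)^2 ∂μ := by
    have hSa'm : MeasurableSet {x : EuclideanSpace ℝ (Fin d) | a < F x - m} :=
      hFm measurableSet_Ioi
    have h1 := sq_integral_le μ hgm hSa'm hg0 hg1 (fun z hz => by
      have hz' : ¬ (a < F z - m) := hz
      exact hgzero z (not_lt.mp hz'))
    refine h1.trans ?_
    apply mul_le_mul_of_nonneg_right _ (integral_nonneg (fun z => sq_nonneg _))
    apply ENNReal.toReal_mono (measure_ne_top μ Sa)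
    apply measure_mono
    intro z hz
    have : a < F z - m := hz
    exact le_of_lt this
  -- apply WP
  have hvar := hWP1 g hglip.locallyLipschitz hbdda hbddb
  -- assemble
  set Q := ∫ z, (g z)^2 ∂μ with hQ
  set Ra := (μ Sa).toReal with hRa
  set Rc := (μ Sc).toReal with hRc
  have hRa1 : Ra ≤ 1 := by
    have h := ENNReal.toReal_mono ENNReal.one_ne_top (prob_le_one (μ := μ) (s := Sa))
    simpa [hRa] using h
  have hRc0 : 0 ≤ Rc := ENNReal.toReal_nonneg
  have hβG : βs * ∫ z, ‖fderiv ℝ g z‖^2 ∂μ ≤ βs * (c0^2 * ((μ Sa).toReal - (μ Sc).toReal)) := by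
    apply mul_le_mul_of_nonneg_left _ hβ.le
    calc ∫ z, ‖fderiv ℝ g z‖^2 ∂μ ≤ c0^2 * (μ D).toReal := hG
    _ ≤ c0^2 * ((μ Sa).toReal - (μ Sc).toReal) :=
        mul_le_mul_of_nonneg_left hDmeas (sq_nonneg _)
  have hsosc : s * (osc g)^2 ≤ s := by nlinarith
  have h1 : Q - (∫ z, g z ∂μ)^2 ≥ Q - Ra * Q := by linarith [hCS]
  have h2 : Rc * (1 - Ra) ≤ Q * (1 - Ra) :=
    mul_le_mul_of_nonneg_right hQc (by linarith)
  have h3 : Q - Ra * Q = Q * (1 - Ra) := by ring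
  have heq : βs * (c0^2 * (Ra - Rc)) = βs * c0^2 * (Ra - Rc) := by ring
  have h4 : βs * ∫ z, ‖fderiv ℝ g z‖^2 ∂μ + s * (osc g)^2 ≤
      βs * c0^2 * (Ra - Rc) + s := by linarith [hβG, hsosc, heq]
  show Rc * (1 - Ra) ≤ βs * c0^2 * (Ra - Rc) + s
  linarith [hvar, h1, h2, h3, h4]

set_option maxHeartbeats 2000000 in
theorem deviation_bound {d : ℕ}
    (μ : Measure (EuclideanSpace ℝ (Fin d))) [IsProbabilityMeasure μ]
    (β : ℝ → ℝ) (hβ : Antitone β) (hβpos : ∀ s ∈ Set.Ioo (0:ℝ) (1/4), 0 < β s)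
    (hWP : ∀ f : EuclideanSpace ℝ (Fin d) → ℝ, LocallyLipschitz f →
      BddAbove (Set.range f) → BddBelow (Set.range f) →
      ∀ s ∈ Set.Ioo (0:ℝ) (1/4),
        ∫ x, (f x)^2 ∂μ - (∫ x, f x ∂μ)^2 ≤
          β s * ∫ x, ‖fderiv ℝ f x‖^2 ∂μ + s * (osc f)^2)
    (L : NNReal) (hL : 0 < (L:ℝ))
    (F : EuclideanSpace ℝ (Fin d) → ℝ) (hF : LipschitzWith L F)
    (m : ℝ) (hm₁ : μ {x | m < F x} ≤ 1/2) (hm₂ : μ {x | F x < m} ≤ 1/2) :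
    ∀ k : ℕ, 1 ≤ k → ∀ s ∈ Set.Ioo (0:ℝ) (1/4),
      (μ {x | (k : ℝ) < F x - m}).toReal ≤
        2 * s + (Real.sqrt (Real.exp 1) / 2)
          * Real.exp (-(k : ℝ) / (4 * (L:ℝ) * Real.sqrt (β s))) := by
  intro k hk s hs
  obtain ⟨hs0, hs4⟩ := hs
  have hβp : 0 < β s := hβpos s ⟨hs0, hs4⟩
  set b := Real.sqrt (β s) with hbdef
  have hb : 0 < b := Real.sqrt_pos.mpr hβp
  have hb2 : b^2 = β s := Real.sq_sqrt hβp.le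
  have hk1 : (1:ℝ) ≤ (k:ℝ) := by exact_mod_cast hk
  have hkpos : (0:ℝ) < (k:ℝ) := by linarith
  have hLb : 0 < (L:ℝ) * b := mul_pos hL hb
  set K := (k:ℝ) / ((L:ℝ)*b) with hKdef
  have hKpos : 0 < K := div_pos hkpos hLb
  have hsqrtE : Real.sqrt (Real.exp 1) = Real.exp (1/2) := by
    have h2 : Real.exp (1/2:ℝ) ^ (2:ℕ) = Real.exp 1 := by
      rw [← Real.exp_nat_mul]; norm_num
    rw [← h2]
    exact Real.sqrt_sq (Real.exp_pos _).le
  have harg : -(k:ℝ) / (4 * (L:ℝ) * b) = 1/2 - K/4 - 1/2 := by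
    rw [hKdef]; field_simp; ring
  set T := Real.sqrt (Real.exp 1) / 2 * Real.exp (-(k:ℝ) / (4 * (L:ℝ) * b)) with hTdef
  have hTval : T = Real.exp (1/2 - K/4) / 2 := by
    rw [hTdef, hsqrtE, harg, div_mul_eq_mul_div, ← Real.exp_add]
    ring_nf
  have hTpos : 0 < T := by rw [hTval]; positivity
  -- R facts
  set R : ℝ → ℝ := fun t => (μ {x | t ≤ F x - m}).toReal with hRdef
  have hR0 : ∀ t : ℝ, 0 ≤ R t := fun t => ENNReal.toReal_nonneg
  have hRhalf : ∀ t : ℝ, 0 < t → R t ≤ 1/2 := by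
    intro t ht
    have hsub : {x | t ≤ F x - m} ⊆ {x | m < F x} := by
      intro z hz
      have hz' : t ≤ F z - m := hz
      show m < F z
      linarith
    have h1 : μ {x | t ≤ F x - m} ≤ 1/2 := le_trans (measure_mono hsub) hm₁
    have h2 := ENNReal.toReal_mono (by simp : (1/2 : ENNReal) ≠ ⊤) h1
    calc R t ≤ ((1:ENNReal)/2).toReal := h2
    _ = 1/2 := by simp
  have hWP1 : ∀ f : EuclideanSpace ℝ (Fin d) → ℝ, LocallyLipschitz f →
      BddAbove (Set.range f) → BddBelow (Set.range f) →
        ∫ x, (f x)^2 ∂μ - (∫ x, f x ∂μ)^2 ≤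
          (β s) * ∫ x, ‖fderiv ℝ f x‖^2 ∂μ + s * (osc f)^2 :=
    fun f hf hA hB => hWP f hf hA hB s ⟨hs0, hs4⟩
  have hF' : LipschitzWith (Real.toNNReal ((L:ℝ))) F := by
    rwa [Real.toNNReal_coe]
  -- step lemma
  have step : ∀ a c : ℝ, 0 < a → a < c →
      R c * (1 - R a + (16/9) * (β s) * (L:ℝ)^2 / (c-a)^2)
        ≤ (16/9) * (β s) * (L:ℝ)^2 / (c-a)^2 * R a + s := by
    intro a c ha hac
    have hca : (0:ℝ) < c - a := by linarith
    have hbb1 : a < a + (3/4)*(c-a) := by nlinarith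
    have hbb2 : a + (3/4)*(c-a) < c := by nlinarith
    have h := core_step μ (β s) ((L:ℝ)) s hβp hL F hF' m hWP1 hs0 ha hbb1 hbb2
    have he2 : (β s) * ((L:ℝ)/((a + (3/4)*(c-a)) - a))^2 = (16/9)*(β s)*(L:ℝ)^2/(c-a)^2 := by
      rw [show (a + (3/4)*(c-a)) - a = (3/4)*(c-a) from by ring]
      field_simp
      ring
    rw [he2] at h
    have h' : R c * (1 - R a) ≤ (16/9)*(β s)*(L:ℝ)^2/(c-a)^2 * (R a - R c) + s := h
    linarith [h']
  -- main bound
  have hmain : R (k:ℝ) ≤ 2*s + T := by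
    rcases le_or_gt K 2 with hK2 | hK2
    · -- trivial case
      have h1 : (1:ℝ) ≤ Real.exp (1/2 - K/4) := by
        have := Real.add_one_le_exp (1/2 - K/4)
        linarith
      have hT12 : (1:ℝ)/2 ≤ T := by rw [hTval]; linarith
      have := hRhalf (k:ℝ) hkpos
      linarith
    rcases le_or_gt K (15/2) with hK7 | hK7
    · -- single-step case, 2 < K ≤ 7.5
      have ha0 : (0:ℝ) < (k:ℝ)/200 := by positivity
      have hac : (k:ℝ)/200 < (k:ℝ) := by linarith
      have h := step ((k:ℝ)/200) (k:ℝ) ha0 hac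
      set q2 := (16/9)*(β s)*(L:ℝ)^2/((k:ℝ) - (k:ℝ)/200)^2 with hq2def
      have hdk : (0:ℝ) < (k:ℝ) - (k:ℝ)/200 := by linarith
      have hq2pos : 0 < q2 := div_pos (by positivity) (pow_pos hdk 2)
      have hRa := hRhalf ((k:ℝ)/200) ha0
      have hr0 := hR0 (k:ℝ)
      have hmono : R (k:ℝ) * (1/2 + q2) ≤ R (k:ℝ) * (1 - R ((k:ℝ)/200) + q2) :=
        mul_le_mul_of_nonneg_left (by linarith) hr0
      have hRk : R (k:ℝ) ≤ 2*s + q2 := by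
        nlinarith [h, hmono, mul_pos hs0 hq2pos, sq_nonneg q2, hq2pos]
      have hq2val : q2 = (16/9)*(200/199)^2 / K^2 := by
        rw [hq2def, hKdef, ← hb2, show (k:ℝ) - (k:ℝ)/200 = (199/200)*(k:ℝ) from by ring]
        field_simp
      have hq2le : q2 ≤ (9/5)/K^2 := by
        rw [hq2val]
        gcongr
        norm_num
      have hE : Real.exp (11/8) ≤ 3.956 := by
        have h8 : Real.exp (11/8:ℝ) ^ (8:ℕ) = Real.exp 11 := by
          rw [← Real.exp_nat_mul]; norm_num
        have h11 : Real.exp (11:ℝ) = Real.exp 1 ^ (11:ℕ) := by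
          rw [← Real.exp_nat_mul]; norm_num
        have h2 : Real.exp 1 ^ (11:ℕ) ≤ (2.7182818286:ℝ) ^ (11:ℕ) :=
          pow_le_pow_left₀ (Real.exp_pos 1).le Real.exp_one_lt_d9.le 11
        have h3 : (2.7182818286:ℝ) ^ (11:ℕ) ≤ (3.956:ℝ) ^ (8:ℕ) := by norm_num
        have h4 : Real.exp (11/8:ℝ) ^ (8:ℕ) ≤ (3.956:ℝ) ^ (8:ℕ) := by
          rw [h8, h11]; linarith
        exact le_of_pow_le_pow_left₀ (by norm_num) (by norm_num) h4
      have hnum : (9/5)/K^2 ≤ T := by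
        rw [hTval]
        set t := (K-2)/(11/2) with htdef
        have ht0 : 0 ≤ t := by rw [htdef]; linarith
        have hconv := convexOn_exp.2 (Set.mem_univ (0:ℝ)) (Set.mem_univ (11/8:ℝ))
          (by rw [htdef]; linarith : (0:ℝ) ≤ 1 - t) ht0 (by ring)
        simp only [smul_eq_mul, Real.exp_zero] at hconv
        rw [show (1-t)*0 + t*(11/8) = (K-2)/4 from by rw [htdef]; ring] at hconv
        have hchord : Real.exp ((K-2)/4) ≤ 1 + t*2.956 := by
          nlinarith [hconv, mul_le_mul_of_nonneg_left hE ht0]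
        have hKK : (18/5) * Real.exp ((K-2)/4) ≤ K^2 := by
          have h2 : (18/5) * (1 + t*2.956) ≤ 4*K - 4 := by rw [htdef]; linarith
          have h3 : 4*K - 4 ≤ K^2 := by nlinarith [sq_nonneg (K-2)]
          nlinarith [hchord]
        have hmulE : Real.exp (1/2 - K/4) * Real.exp ((K-2)/4) = 1 := by
          rw [← Real.exp_add, show (1/2 - K/4) + (K-2)/4 = 0 from by ring, Real.exp_zero]
        have hupos := Real.exp_pos (1/2 - K/4)
        rw [div_le_div_iff₀ (pow_pos hKpos 2) (by norm_num : (0:ℝ) < 2)]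
        nlinarith [mul_le_mul_of_nonneg_left hKK hupos.le, hmulE]
      linarith [hRk, hq2le, hnum]
    · -- multi-step cases, K > 7.5
      set x := Real.sqrt (1 - 4*s) with hxdef
      have hx2 : x^2 = 1 - 4*s := Real.sq_sqrt (by linarith)
      have hx0 : 0 < x := Real.sqrt_pos.mpr (by linarith)
      have hx1 : x < 1 := by nlinarith [hx2, hx0]
      have hsx : s = (1 - x^2)/4 := by rw [hx2]; ring
      rcases le_or_gt (1/9 : ℝ) s with hsB | hsC
      · -- case B : 3 steps, conclude R k ≤ 2 s
        set Δ := (199/600)*(k:ℝ) with hΔdef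
        have hΔpos : 0 < Δ := by rw [hΔdef]; positivity
        set q : ℝ := 2*((16/9)*(β s)*(L:ℝ)^2/Δ^2) with hqdef
        have hqpos : 0 < q := by
          rw [hqdef]
          have := pow_pos hΔpos 2
          positivity
        have stepB : ∀ a : ℝ, 0 < a → R (a + Δ) * (1 - R a + q/2) ≤ q/2 * R a + s := by
          intro a ha
          have h := step a (a + Δ) ha (by linarith)
          rw [show a + Δ - a = Δ from by ring] at h
          rw [show q/2 = (16/9)*(β s)*(L:ℝ)^2/Δ^2 from by rw [hqdef]; ring]
          exact h
        have hkK : (15/2)*((L:ℝ)*b) < (k:ℝ) := by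
          rw [hKdef] at hK7
          exact (lt_div_iff₀ hLb).mp hK7
        have hqle : q ≤ 2/3 := by
          have hqval : q = (32/9)*(600/199)^2 / K^2 := by
            rw [hqdef, hΔdef, hKdef, ← hb2]
            field_simp
            ring
          have h56 : (15/2:ℝ)^2 ≤ K^2 := by nlinarith [hK7, hKpos]
          have h1 : q ≤ 33 / K^2 := by
            rw [hqval]
            gcongr
            norm_num
          have h2 : (33:ℝ)/K^2 ≤ 33/(15/2)^2 :=
            div_le_div_of_nonneg_left (by norm_num) (by positivity) h56
          have h3 : (33:ℝ)/(15/2)^2 ≤ 2/3 := by norm_num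
          linarith
        set ρ := (1-x+q)/(1+x+q) with hρdef
        have hρ0 : 0 ≤ ρ := div_nonneg (by linarith) (by linarith)
        have ha0 : (0:ℝ) < (k:ℝ)/200 := by positivity
        have ha1 : (0:ℝ) < (k:ℝ)/200 + Δ := by linarith
        have ha2 : (0:ℝ) < (k:ℝ)/200 + Δ + Δ := by linarith
        have hu0 : (R ((k:ℝ)/200) - (1-x)/2)/((1+x)/2 - R ((k:ℝ)/200)) ≤ 1 := by
          have h0 := hRhalf _ ha0
          rw [div_le_one (by linarith)]
          linarith
        have hu1 := ustep hx0 hx1 hsx hqpos (hRhalf _ ha0) (hR0 _) (stepB _ ha0)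
        have hu2 := ustep hx0 hx1 hsx hqpos (hRhalf _ ha1) (hR0 _) (stepB _ ha1)
        have hu3 := ustep hx0 hx1 hsx hqpos (hRhalf _ ha2) (hR0 _) (stepB _ ha2)
        have hc1 : (R ((k:ℝ)/200 + Δ) - (1-x)/2)/((1+x)/2 - R ((k:ℝ)/200 + Δ)) ≤ ρ := by
          calc (R ((k:ℝ)/200 + Δ) - (1-x)/2)/((1+x)/2 - R ((k:ℝ)/200 + Δ))
              ≤ ρ * ((R ((k:ℝ)/200) - (1-x)/2)/((1+x)/2 - R ((k:ℝ)/200))) := hu1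
          _ ≤ ρ * 1 := mul_le_mul_of_nonneg_left hu0 hρ0
          _ = ρ := by ring
        have hc2 : (R ((k:ℝ)/200 + Δ + Δ) - (1-x)/2)/((1+x)/2 - R ((k:ℝ)/200 + Δ + Δ)) ≤ ρ*ρ := by
          calc (R ((k:ℝ)/200 + Δ + Δ) - (1-x)/2)/((1+x)/2 - R ((k:ℝ)/200 + Δ + Δ))
              ≤ ρ * ((R ((k:ℝ)/200 + Δ) - (1-x)/2)/((1+x)/2 - R ((k:ℝ)/200 + Δ))) := hu2
          _ ≤ ρ * ρ := mul_le_mul_of_nonneg_left hc1 hρ0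
        have hc3 : (R ((k:ℝ)/200 + Δ + Δ + Δ) - (1-x)/2)/((1+x)/2 - R ((k:ℝ)/200 + Δ + Δ + Δ)) ≤ ρ^3 := by
          calc (R ((k:ℝ)/200 + Δ + Δ + Δ) - (1-x)/2)/((1+x)/2 - R ((k:ℝ)/200 + Δ + Δ + Δ))
              ≤ ρ * ((R ((k:ℝ)/200 + Δ + Δ) - (1-x)/2)/((1+x)/2 - R ((k:ℝ)/200 + Δ + Δ))) := hu3
          _ ≤ ρ * (ρ*ρ) := mul_le_mul_of_nonneg_left hc2 hρ0
          _ = ρ^3 := by ring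
        have hcu : ρ^3 ≤ (1-x)/(1+x) := by
          rw [hρdef]
          exact cubic_bound hx0 hx1 hqpos hqle (by rw [hx2]; linarith)
        have hend : (k:ℝ)/200 + Δ + Δ + Δ = (k:ℝ) := by rw [hΔdef]; ring
        rw [hend] at hc3
        have := conv_branch1 hx0 hx1 hsx (hRhalf _ hkpos) (le_trans hc3 hcu)
        linarith
      · -- case C : many steps
        have hx59 : (5:ℝ)/9 ≤ x^2 := by rw [hx2]; linarith
        have hx74 : (0.7453:ℝ) ≤ x := by nlinarith [hx59, hx0]
        set Δ := (19/10)*((L:ℝ)*b) with hΔdef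
        have hΔpos : 0 < Δ := by rw [hΔdef]; positivity
        set y := K/(19/10) with hydef
        have hy0 : 0 < y := by rw [hydef]; positivity
        set n := ⌈y⌉₊ - 1 with hndef
        have hceil1 : 1 ≤ ⌈y⌉₊ := Nat.one_le_ceil_iff.mpr hy0
        have hncast : (n:ℝ) = (⌈y⌉₊:ℝ) - 1 := by
          rw [hndef, Nat.cast_sub hceil1, Nat.cast_one]
        have hnu : (n:ℝ) < y := by
          have := Nat.ceil_lt_add_one hy0.le
          rw [hncast]; linarith
        have hnl : y - 1 ≤ (n:ℝ) := by
          have := Nat.le_ceil y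
          rw [hncast]; linarith
        set lev : ℕ → ℝ := fun j => (k:ℝ) - ((n:ℝ) - (j:ℝ))*Δ with hlevdef
        have hyΔ : y * Δ = (k:ℝ) := by
          rw [hydef, hΔdef, hKdef]; field_simp
        have hlevpos : ∀ j : ℕ, 0 < lev j := by
          intro j
          have h1 : ((n:ℝ) - (j:ℝ))*Δ ≤ (n:ℝ)*Δ := by
            apply mul_le_mul_of_nonneg_right _ hΔpos.le
            have : (0:ℝ) ≤ (j:ℝ) := Nat.cast_nonneg j
            linarith
          have h2 : (n:ℝ)*Δ < (k:ℝ) := by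
            have h3 : (n:ℝ) * Δ < y * Δ := mul_lt_mul_of_pos_right hnu hΔpos
            linarith [hyΔ]
          show 0 < (k:ℝ) - ((n:ℝ) - (j:ℝ))*Δ
          linarith
        have hlevsucc : ∀ j : ℕ, lev j + Δ = lev (j+1) := by
          intro j
          show (k:ℝ) - ((n:ℝ) - (j:ℝ))*Δ + Δ = (k:ℝ) - ((n:ℝ) - ((j:ℕ)+1:ℕ))*Δ
          push_cast
          ring
        have hq2val : (16/9)*(β s)*(L:ℝ)^2/Δ^2 = 1600/3249 := by
          rw [hΔdef, ← hb2]
          field_simp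
          ring
        set q : ℝ := 3200/3249 with hqdef
        have hqpos : (0:ℝ) < q := by rw [hqdef]; norm_num
        set ρ := (1-x+q)/(1+x+q) with hρdef
        have hρ0 : 0 ≤ ρ := div_nonneg (by rw [hqdef]; linarith) (by rw [hqdef]; linarith)
        have hu : ∀ j : ℕ, (R (lev j) - (1-x)/2)/((1+x)/2 - R (lev j)) ≤ ρ^j := by
          intro j
          induction j with
          | zero =>
            have h0 := hRhalf (lev 0) (hlevpos 0)
            rw [pow_zero, div_le_one (by linarith)]
            linarith
          | succ j ih =>
            have hstep := step (lev j) (lev (j+1)) (hlevpos j)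
              (by rw [← hlevsucc j]; linarith)
            rw [← hlevsucc j, show lev j + Δ - lev j = Δ from by ring, hq2val] at hstep
            have hq2' : q/2 = (1600/3249:ℝ) := by rw [hqdef]; norm_num
            have hu' := ustep hx0 hx1 hsx hqpos (hRhalf _ (hlevpos j)) (hR0 _)
              (by rw [hq2']; exact hstep)
            calc (R (lev (j+1)) - (1-x)/2)/((1+x)/2 - R (lev (j+1)))
                ≤ ρ * ((R (lev j) - (1-x)/2)/((1+x)/2 - R (lev j))) := by
                  rw [← hlevsucc j]; exact hu'
            _ ≤ ρ * ρ^j := mul_le_mul_of_nonneg_left ih hρ0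
            _ = ρ^(j+1) := by ring
        have hE34 : Real.exp (3/4) ≤ 2.1172 := by
          have h8 : Real.exp (3/4:ℝ) ^ (4:ℕ) = Real.exp 3 := by
            rw [← Real.exp_nat_mul]; norm_num
          have h11 : Real.exp (3:ℝ) = Real.exp 1 ^ (3:ℕ) := by
            rw [← Real.exp_nat_mul]; norm_num
          have h2 : Real.exp 1 ^ (3:ℕ) ≤ (2.7182818286:ℝ) ^ (3:ℕ) :=
            pow_le_pow_left₀ (Real.exp_pos 1).le Real.exp_one_lt_d9.le 3
          have h3 : (2.7182818286:ℝ) ^ (3:ℕ) ≤ (2.1172:ℝ) ^ (4:ℕ) := by norm_num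
          have h4 : Real.exp (3/4:ℝ) ^ (4:ℕ) ≤ (2.1172:ℝ) ^ (4:ℕ) := by
            rw [h8, h11]; linarith
          exact le_of_pow_le_pow_left₀ (by norm_num) (by norm_num) h4
        have hρe : ρ ≤ Real.exp (-(3/4:ℝ)) := by
          rw [Real.exp_neg, hρdef, inv_eq_one_div]
          rw [div_le_div_iff₀ (by linarith) (Real.exp_pos _)]
          have h1 : (1-x+q) * Real.exp (3/4) ≤ (1-x+q) * 2.1172 := by
            apply mul_le_mul_of_nonneg_left hE34
            rw [hqdef]; linarith
          have h2 : (1-x+q) * 2.1172 ≤ 1+x+q := by rw [hqdef]; linarith [hx74]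
          linarith
        have hun : (R (lev n) - (1-x)/2)/((1+x)/2 - R (lev n)) ≤ Real.exp (-(3/4:ℝ))^n :=
          le_trans (hu n) (pow_le_pow_left₀ hρ0 hρe n)
        have hexpn : Real.exp (-(3/4:ℝ))^n = Real.exp ((n:ℝ) * (-(3/4))) := by
          rw [Real.exp_nat_mul]
        have hTc : Real.exp ((n:ℝ) * (-(3/4:ℝ))) ≤ T := by
          rw [hTval, le_div_iff₀ (by norm_num : (0:ℝ) < 2)]
          have hl2 : Real.log 2 ≤ 0.6931471808 := Real.log_two_lt_d9.le
          have h2e : Real.exp (Real.log 2) = 2 := Real.exp_log (by norm_num)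
          calc Real.exp ((n:ℝ)*(-(3/4:ℝ))) * 2
              = Real.exp ((n:ℝ)*(-(3/4:ℝ)) + Real.log 2) := by rw [Real.exp_add, h2e]
          _ ≤ Real.exp (1/2 - K/4) := by
              apply Real.exp_le_exp.mpr
              have hyK : y = K/(19/10) := hydef
              have : K/(19/10) - 1 ≤ (n:ℝ) := by rw [← hyK]; exact hnl
              linarith [hl2, hK7, this]
        have hrn := conv_branch2 hx0 hx1 hsx (hRhalf (lev n) (hlevpos n)) (hR0 _) hTpos
          (le_trans hun (by rw [hexpn]; exact hTc))
        have hlevn : lev n = (k:ℝ) := by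
          show (k:ℝ) - ((n:ℝ) - (n:ℝ))*Δ = (k:ℝ)
          ring
        rw [hlevn] at hrn
        exact hrn
  -- conclude
  have hfin : (μ {x | (k:ℝ) < F x - m}).toReal ≤ R (k:ℝ) := by
    apply ENNReal.toReal_mono (measure_ne_top μ _)
    apply measure_mono
    intro z hz
    have hz' : (k:ℝ) < F z - m := hz
    show (k:ℝ) ≤ F z - m
    linarith
  calc (μ {x | (k:ℝ) < F x - m}).toReal ≤ R (k:ℝ) := hfin
  _ ≤ 2*s + T := hmain
end
end

section
/- Let μ be a probability measure on a metric measure space with isoperimetric function I_μ, and assume the product measures μ^n. Then for all n ≥ 1 and a ∈ (0,1): I_{μ^n}(a^n) ≤ n·a^{n−1}·I_μ(a). -/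
open MeasureTheory Set Metric Filter

noncomputable section

/-- Boundary measure (Minkowski content style lower limit) of a set. -/
def boundaryMeasure {α : Type*} [MetricSpace α] [MeasurableSpace α]
    (μ : Measure α) (A : Set α) : ENNReal :=
  Filter.liminf (fun h : ℝ => μ (Metric.thickening h A \ A) / ENNReal.ofReal h)
    (nhdsWithin 0 (Set.Ioi 0))

/-- Isoperimetric profile of a measure. -/
def isoProfile {α : Type*} [MetricSpace α] [MeasurableSpace α]
    (μ : Measure α) (t : ℝ) : ENNReal :=
  sInf { r | ∃ A : Set α, MeasurableSet A ∧ μ A = ENNReal.ofReal t ∧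
    r = boundaryMeasure μ A }

theorem isoProfile_product_bound {α : Type*} [MetricSpace α] [MeasurableSpace α]
    [OpensMeasurableSpace α]
    (μ : Measure α) [IsProbabilityMeasure μ] (n : ℕ) (hn : 1 ≤ n)
    (a : ℝ) (ha : a ∈ Set.Ioo (0:ℝ) 1) :
    isoProfile (Measure.pi fun _ : Fin n => μ) (a^n) ≤
      (n : ENNReal) * ENNReal.ofReal (a^(n-1)) * isoProfile μ a := by
  obtain ⟨ha0, ha1⟩ := ha
  set ν : Measure (Fin n → α) := Measure.pi fun _ : Fin n => μ with hν
  set c : ENNReal := (n : ENNReal) * ENNReal.ofReal (a^(n-1)) with hcdef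
  have hn0 : (n : ENNReal) ≠ 0 := by
    simp only [ne_eq, Nat.cast_eq_zero]; omega
  have hc0 : c ≠ 0 := by
    refine mul_ne_zero hn0 ?_
    simp [ENNReal.ofReal_eq_zero, not_le, pow_pos ha0]
  have hcT : c ≠ ⊤ := ENNReal.mul_ne_top (ENNReal.natCast_ne_top n) ENNReal.ofReal_ne_top
  have hcpow : c = (n : ENNReal) * (ENNReal.ofReal a) ^ (n - 1) := by
    rw [hcdef, ENNReal.ofReal_pow ha0.le]
  have key : ∀ A : Set α, MeasurableSet A → μ A = ENNReal.ofReal a →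
      isoProfile ν (a ^ n) ≤ c * boundaryMeasure μ A := by
    intro A hA hμA
    have hApi : MeasurableSet (Set.pi Set.univ fun _ : Fin n => A) :=
      MeasurableSet.univ_pi fun _ => hA
    have hνA : ν (Set.pi Set.univ fun _ : Fin n => A) = ENNReal.ofReal (a ^ n) := by
      rw [hν, Measure.pi_pi]
      simp [hμA, ENNReal.ofReal_pow ha0.le]
    have h1 : isoProfile ν (a ^ n) ≤ boundaryMeasure ν (Set.pi Set.univ fun _ : Fin n => A) :=
      sInf_le ⟨_, hApi, hνA, rfl⟩
    by_cases hcl : μ (closure A) = ENNReal.ofReal a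
    · -- main case: the closure has the same measure
      refine h1.trans ?_
      -- pointwise bound
      have hpt : ∀ h : ℝ,
          ν (thickening h (Set.pi Set.univ fun _ : Fin n => A) \
              Set.pi Set.univ fun _ : Fin n => A) ≤
            ((n : ENNReal) * μ (thickening h A) ^ (n - 1)) * μ (thickening h A \ A) := by
        intro h
        set B := thickening h A with hB
        have hsub : thickening h (Set.pi Set.univ fun _ : Fin n => A) \
              (Set.pi Set.univ fun _ : Fin n => A) ⊆
            ⋃ i : Fin n, Set.pi Set.univ (fun j : Fin n => if j = i then B \ A else B) := by
          rintro x ⟨hx1, hx2⟩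
          obtain ⟨z, hz, hdz⟩ := mem_thickening_iff.mp hx1
          have hxB : ∀ j : Fin n, x j ∈ B := fun j =>
            mem_thickening_iff.mpr ⟨z j, hz j (mem_univ j),
              lt_of_le_of_lt (dist_le_pi_dist x z j) hdz⟩
          have : ∃ i : Fin n, x i ∉ A := by
            by_contra hcon
            push_neg at hcon
            exact hx2 fun i _ => hcon i
          obtain ⟨i, hi⟩ := this
          refine mem_iUnion.mpr ⟨i, fun j _ => ?_⟩
          by_cases hj : j = i
          · subst hj; simp only [if_pos rfl]; exact ⟨hxB j, hi⟩
          · simp only [if_neg hj]; exact hxB j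
        refine (measure_mono hsub).trans ?_
        refine (measure_iUnion_le _).trans ?_
        rw [tsum_fintype]
        have hterm : ∀ i : Fin n,
            ν (Set.pi Set.univ (fun j : Fin n => if j = i then B \ A else B)) =
              μ (B \ A) * μ B ^ (n - 1) := by
          intro i
          rw [hν, Measure.pi_pi,
            ← Finset.mul_prod_erase Finset.univ _ (Finset.mem_univ i)]
          have h2 : ∀ j ∈ Finset.univ.erase i, μ (if j = i then B \ A else B) = μ B :=
            fun j hj => by rw [if_neg (Finset.mem_erase.mp hj).1]
          rw [Finset.prod_congr rfl h2, Finset.prod_const,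
            Finset.card_erase_of_mem (Finset.mem_univ i), Finset.card_univ, Fintype.card_fin]
          simp
        rw [Finset.sum_congr rfl fun i _ => hterm i, Finset.sum_const, Finset.card_univ,
          Fintype.card_fin, nsmul_eq_mul]
        ring_nf
        exact le_rfl
      -- liminf bound
      rw [boundaryMeasure, boundaryMeasure]
      have hfg : Filter.liminf (fun h : ℝ =>
            ν (thickening h (Set.pi Set.univ fun _ : Fin n => A) \
              Set.pi Set.univ fun _ : Fin n => A) / ENNReal.ofReal h)
            (nhdsWithin 0 (Set.Ioi 0)) ≤
          Filter.liminf (fun h : ℝ =>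
            (((n : ENNReal) * μ (thickening h A) ^ (n - 1)) *
              (μ (thickening h A \ A) / ENNReal.ofReal h))) (nhdsWithin 0 (Set.Ioi 0)) := by
        refine Filter.liminf_le_liminf (Filter.Eventually.of_forall fun h => ?_)
        rw [← mul_div_assoc]
        exact ENNReal.div_le_div_right (hpt h) _
      refine hfg.trans ?_
      have hu : Filter.Tendsto (fun h : ℝ => (n : ENNReal) * μ (thickening h A) ^ (n - 1))
          (nhdsWithin 0 (Set.Ioi 0)) (nhds c) := by
        have h2 : Filter.Tendsto (fun h : ℝ => μ (thickening h A))
            (nhdsWithin 0 (Set.Ioi 0)) (nhds (μ (closure A))) :=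
          tendsto_measure_thickening ⟨1, one_pos, measure_ne_top μ _⟩
        rw [hcl] at h2
        rw [hcpow]
        exact ENNReal.Tendsto.const_mul (ENNReal.Tendsto.pow h2)
          (Or.inr (ENNReal.natCast_ne_top n))
      have hlimsup : Filter.limsup (fun h : ℝ => (n : ENNReal) * μ (thickening h A) ^ (n - 1))
          (nhdsWithin 0 (Set.Ioi 0)) = c := hu.limsup_eq
      have := ENNReal.liminf_mul_le
        (u := fun h : ℝ => (n : ENNReal) * μ (thickening h A) ^ (n - 1))
        (v := fun h : ℝ => μ (thickening h A \ A) / ENNReal.ofReal h)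
        (f := nhdsWithin 0 (Set.Ioi 0))
        (by rw [hlimsup]; exact Or.inl hc0) (by rw [hlimsup]; exact Or.inl hcT)
      rw [hlimsup] at this
      exact this
    · -- degenerate case: boundary measure is infinite
      have hdne : μ (closure A \ A) ≠ 0 := by
        intro h0
        apply hcl
        refine le_antisymm ?_ (by rw [← hμA]; exact measure_mono subset_closure)
        calc μ (closure A) ≤ μ (A ∪ (closure A \ A)) :=
              measure_mono (fun x hx => by
                by_cases hxA : x ∈ A
                · exact Or.inl hxA
                · exact Or.inr ⟨hx, hxA⟩)
          _ ≤ μ A + μ (closure A \ A) := measure_union_le _ _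
          _ = ENNReal.ofReal a := by rw [h0, add_zero, hμA]
      have htop : boundaryMeasure μ A = ⊤ := by
        rw [boundaryMeasure]
        have htend : Filter.Tendsto (fun h : ℝ => μ (closure A \ A) / ENNReal.ofReal h)
            (nhdsWithin 0 (Set.Ioi 0)) (nhds ⊤) := by
          have h0 : Filter.Tendsto (fun h : ℝ => ENNReal.ofReal h)
              (nhdsWithin 0 (Set.Ioi 0)) (nhds 0) := by
            have := (ENNReal.continuous_ofReal.tendsto 0).mono_left
              (nhdsWithin_le_nhds (s := Set.Ioi (0:ℝ)))
            simpa using this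
          have hinv : Filter.Tendsto (fun h : ℝ => (ENNReal.ofReal h)⁻¹)
              (nhdsWithin 0 (Set.Ioi 0)) (nhds ⊤) := by
            have := ENNReal.tendsto_inv_iff.mpr h0
            simpa using this
          have := ENNReal.Tendsto.const_mul hinv (Or.inr (measure_ne_top μ _))
            (a := μ (closure A \ A))
          rw [ENNReal.mul_top hdne] at this
          simpa [div_eq_mul_inv] using this
        have hmono : ∀ᶠ h in nhdsWithin (0:ℝ) (Set.Ioi 0),
            μ (closure A \ A) / ENNReal.ofReal h ≤
              μ (thickening h A \ A) / ENNReal.ofReal h := by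
          filter_upwards [self_mem_nhdsWithin] with h hh
          exact ENNReal.div_le_div_right
            (measure_mono (diff_subset_diff_left (closure_subset_thickening hh A))) _
        have := Filter.liminf_le_liminf hmono
        rw [htend.liminf_eq] at this
        exact top_le_iff.mp this
      rw [htop, ENNReal.mul_top hc0]
      exact le_top
  -- conclude using the infimum
  rcases Set.eq_empty_or_nonempty { r | ∃ A : Set α, MeasurableSet A ∧
      μ A = ENNReal.ofReal a ∧ r = boundaryMeasure μ A } with hS | hS
  · have : isoProfile μ a = ⊤ := by
      unfold isoProfile
      rw [hS, sInf_empty]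
    rw [this, ENNReal.mul_top hc0]
    exact le_top
  · haveI : Nonempty { r // ∃ A : Set α, MeasurableSet A ∧
        μ A = ENNReal.ofReal a ∧ r = boundaryMeasure μ A } := hS.to_subtype
    have heq : c * isoProfile μ a = ⨅ r : { r | ∃ A : Set α, MeasurableSet A ∧
        μ A = ENNReal.ofReal a ∧ r = boundaryMeasure μ A }, c * (r : ENNReal) := by
      unfold isoProfile
      rw [sInf_eq_iInf', ENNReal.mul_iInf_of_ne hc0 hcT]
    rw [show (n : ENNReal) * ENNReal.ofReal (a^(n-1)) * isoProfile μ a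
        = c * isoProfile μ a from rfl, heq]
    refine le_iInf fun r => ?_
    obtain ⟨A, hA, hμA, hr⟩ := r.2
    rw [hr]
    exact key A hA hμA
end
end

section
/- Let p ∈ (0,1), and write Φ_p(x)=|x|^p. The function Φ_{p,α}(x) = |x|^p (log(γ + |x|))^α with α > 0 and γ = e^{2α/(1−p)} satisfies: (i) it is increasing on ℝ⁺ with value 0 at 0; (ii) Φ_{p,α}(2x) ≥ 2^p Φ_{p,α}(x) for x large; (iii) |x Φ_{p,α}''(x)| ≤ Φ_{p,α}'(x) for x large. -/
open Set Real

noncomputable section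

/-- The perturbed power potential `|x|^p (log(γ+|x|))^α`. -/
def PhiPA (p α γ : ℝ) (x : ℝ) : ℝ := |x| ^ p * (Real.log (γ + |x|)) ^ α

lemma hasDerivAt_phiPA (p α γ : ℝ) {x : ℝ} (hγ : 1 < γ) (hx : 0 < x) :
    HasDerivAt (PhiPA p α γ)
      (p * x ^ (p-1) * (Real.log (γ + x)) ^ α +
        x ^ p * (α * (Real.log (γ + x)) ^ (α-1) * (γ + x)⁻¹)) x := by
  have hs : 0 < γ + x := by linarith
  have hL : 0 < Real.log (γ + x) := Real.log_pos (by linarith)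
  have h1 : HasDerivAt (fun y : ℝ => γ + y) 1 x := (hasDerivAt_id x).const_add γ
  have h2 : HasDerivAt (fun y : ℝ => Real.log (γ + y)) ((γ + x)⁻¹) x := by
    simpa using h1.log hs.ne'
  have h3 : HasDerivAt (fun y : ℝ => (Real.log (γ + y)) ^ α)
      (α * (Real.log (γ + x)) ^ (α-1) * (γ + x)⁻¹) x := by
    have := (Real.hasDerivAt_rpow_const (x := Real.log (γ + x)) (p := α)
      (Or.inl hL.ne')).comp x h2
    simpa [Function.comp_def, mul_comm, mul_assoc, mul_left_comm] using this
  have h4 : HasDerivAt (fun y : ℝ => y ^ p) (p * x ^ (p-1)) x :=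
    Real.hasDerivAt_rpow_const (Or.inl hx.ne')
  have h5 := h4.mul h3
  refine h5.congr_of_eventuallyEq ?_
  filter_upwards [lt_mem_nhds hx] with y hy
  simp [PhiPA, abs_of_pos hy]

lemma hasDerivAt_phiPA' (p α γ : ℝ) {x : ℝ} (hγ : 1 < γ) (hx : 0 < x) :
    HasDerivAt (fun y : ℝ => p * y ^ (p-1) * (Real.log (γ + y)) ^ α +
        y ^ p * (α * (Real.log (γ + y)) ^ (α-1) * (γ + y)⁻¹))
      ((p * ((p-1) * x ^ (p-2))) * (Real.log (γ + x)) ^ α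
        + (p * x ^ (p-1)) * (α * (Real.log (γ + x)) ^ (α-1) * (γ + x)⁻¹)
        + ((p * x ^ (p-1)) * (α * (Real.log (γ + x)) ^ (α-1) * (γ + x)⁻¹)
          + x ^ p * ((α * ((α-1) * (Real.log (γ + x)) ^ (α-2) * (γ + x)⁻¹)) * (γ + x)⁻¹
            + (α * (Real.log (γ + x)) ^ (α-1)) * (-1 / (γ + x) ^ 2)))) x := by
  have hs : 0 < γ + x := by linarith
  have hL : 0 < Real.log (γ + x) := Real.log_pos (by linarith)
  have h1 : HasDerivAt (fun y : ℝ => γ + y) 1 x := (hasDerivAt_id x).const_add γ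
  have h2 : HasDerivAt (fun y : ℝ => Real.log (γ + y)) ((γ + x)⁻¹) x := by
    simpa using h1.log hs.ne'
  have h3 : HasDerivAt (fun y : ℝ => (Real.log (γ + y)) ^ α)
      (α * (Real.log (γ + x)) ^ (α-1) * (γ + x)⁻¹) x := by
    have := (Real.hasDerivAt_rpow_const (x := Real.log (γ + x)) (p := α)
      (Or.inl hL.ne')).comp x h2
    simpa [Function.comp_def, mul_comm, mul_assoc, mul_left_comm] using this
  have h3' : HasDerivAt (fun y : ℝ => (Real.log (γ + y)) ^ (α-1))
      ((α-1) * (Real.log (γ + x)) ^ (α-2) * (γ + x)⁻¹) x := by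
    have := (Real.hasDerivAt_rpow_const (x := Real.log (γ + x)) (p := α-1)
      (Or.inl hL.ne')).comp x h2
    have e : α - 1 - 1 = α - 2 := by ring
    simpa [Function.comp_def, e, mul_comm, mul_assoc, mul_left_comm] using this
  have hinv : HasDerivAt (fun y : ℝ => (γ + y)⁻¹) (-1 / (γ + x) ^ 2) x := by
    simpa [Pi.inv_def] using h1.inv hs.ne'
  have hxp1 : HasDerivAt (fun y : ℝ => y ^ (p-1)) ((p-1) * x ^ (p-2)) x := by
    have := Real.hasDerivAt_rpow_const (x := x) (p := p-1) (Or.inl hx.ne')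
    have e : p - 1 - 1 = p - 2 := by ring
    rwa [e] at this
  have hxp : HasDerivAt (fun y : ℝ => y ^ p) (p * x ^ (p-1)) x :=
    Real.hasDerivAt_rpow_const (Or.inl hx.ne')
  have t1 : HasDerivAt (fun y : ℝ => p * y ^ (p-1) * (Real.log (γ + y)) ^ α)
      ((p * ((p-1) * x ^ (p-2))) * (Real.log (γ + x)) ^ α
        + (p * x ^ (p-1)) * (α * (Real.log (γ + x)) ^ (α-1) * (γ + x)⁻¹)) x :=
    ((hxp1.const_mul p).mul h3)
  have inner : HasDerivAt (fun y : ℝ => α * (Real.log (γ + y)) ^ (α-1) * (γ + y)⁻¹)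
      ((α * ((α-1) * (Real.log (γ + x)) ^ (α-2) * (γ + x)⁻¹)) * (γ + x)⁻¹
        + (α * (Real.log (γ + x)) ^ (α-1)) * (-1 / (γ + x) ^ 2)) x :=
    (h3'.const_mul α).mul hinv
  have t2 := hxp.mul inner
  exact t1.add t2

lemma key_ineq (p α x s L : ℝ) (hp0 : 0 < p) (hp1 : p < 1) (hα : 0 < α)
    (hx : 0 < x) (hxs : x < s) (hL1 : 1 ≤ L)
    (h1 : 2*p*α + α^2 ≤ p*(2-p)*L) (h2 : α ≤ p^2*L) :
    |p*(p-1)*L^2*s^2 + 2*p*α*x*L*s + α*(α-1)*x^2 - α*x^2*L|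
      ≤ p*L^2*s^2 + α*x*L*s := by
  have hL0 : 0 < L := by linarith
  have hs0 : 0 < s := by linarith
  have hx2s2 : x^2 ≤ s^2 := by nlinarith
  rw [abs_le]
  constructor
  · have t1 : 0 ≤ α*x*L*(s-x) := by
      have : 0 ≤ s - x := by linarith
      positivity
    have t2 : α*x^2 ≤ p^2*L*x^2 := mul_le_mul_of_nonneg_right h2 (sq_nonneg x)
    have t3 : p^2*L*x^2 ≤ p^2*L*s^2 :=
      mul_le_mul_of_nonneg_left hx2s2 (by positivity)
    have t4 : p^2*L*s^2*1 ≤ p^2*L*s^2*L :=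
      mul_le_mul_of_nonneg_left hL1 (by positivity)
    have t5 : 0 ≤ α^2*x^2 := by positivity
    have t6 : 0 ≤ 2*p*α*x*L*s := by positivity
    nlinarith [t1, t2, t3, t4, t5, t6]
  · have u1 := mul_le_mul_of_nonneg_right h1 (by positivity : (0:ℝ) ≤ L*s^2)
    have u2 : (2*p*α*L*s)*x ≤ (2*p*α*L*s)*s :=
      mul_le_mul_of_nonneg_left hxs.le (by positivity)
    have u3 : α^2*x^2 ≤ α^2*s^2 := mul_le_mul_of_nonneg_left hx2s2 (by positivity)
    have u4 : α^2*s^2*1 ≤ α^2*s^2*L := mul_le_mul_of_nonneg_left hL1 (by positivity)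
    have u5 : 0 ≤ α*x^2*L := by positivity
    have u6 : 0 ≤ α*x*L*s := by positivity
    nlinarith [u1, u2, u3, u4, u5, u6]

lemma deriv_phiPA_eq (p α γ : ℝ) {x : ℝ} (hγ : 1 < γ) (hx : 0 < x) :
    deriv (PhiPA p α γ) x = x ^ (p-1) * (Real.log (γ + x)) ^ (α-2) *
      (p * (Real.log (γ + x))^2 * (γ + x)^2 + α * x * (Real.log (γ + x)) * (γ + x))
        / (γ + x)^2 := by
  have hs : 0 < γ + x := by linarith
  have hL : 0 < Real.log (γ + x) := Real.log_pos (by linarith)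
  rw [(hasDerivAt_phiPA p α γ hγ hx).deriv]
  have e1 : Real.log (γ + x) ^ (α-1) = Real.log (γ + x) ^ (α-2) * Real.log (γ + x) := by
    rw [show α-1 = (α-2)+1 by ring, Real.rpow_add_one hL.ne']
  have e2 : Real.log (γ + x) ^ α = Real.log (γ + x) ^ (α-2) * Real.log (γ + x)
      * Real.log (γ + x) := by
    rw [← Real.rpow_add_one hL.ne', ← Real.rpow_add_one hL.ne']
    congr 1
    ring
  have e3 : x ^ p = x ^ (p-1) * x := by
    rw [← Real.rpow_add_one hx.ne']
    congr 1
    ring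
  rw [e1, e2, e3]
  field_simp

lemma deriv2_phiPA_eq (p α γ : ℝ) {x : ℝ} (hγ : 1 < γ) (hx : 0 < x) :
    deriv (deriv (PhiPA p α γ)) x = x ^ (p-1) * (Real.log (γ + x)) ^ (α-2) *
      (p*(p-1)*(Real.log (γ + x))^2*(γ + x)^2 + 2*p*α*x*(Real.log (γ + x))*(γ + x)
        + α*(α-1)*x^2 - α*x^2*(Real.log (γ + x)))
        / (x * (γ + x)^2) := by
  have hs : 0 < γ + x := by linarith
  have hL : 0 < Real.log (γ + x) := Real.log_pos (by linarith)
  have hev : deriv (PhiPA p α γ) =ᶠ[nhds x]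
      (fun y : ℝ => p * y ^ (p-1) * (Real.log (γ + y)) ^ α +
        y ^ p * (α * (Real.log (γ + y)) ^ (α-1) * (γ + y)⁻¹)) := by
    filter_upwards [lt_mem_nhds hx] with y hy
    exact (hasDerivAt_phiPA p α γ hγ hy).deriv
  rw [hev.deriv_eq, (hasDerivAt_phiPA' p α γ hγ hx).deriv]
  have e1 : Real.log (γ + x) ^ (α-1) = Real.log (γ + x) ^ (α-2) * Real.log (γ + x) := by
    rw [show α-1 = (α-2)+1 by ring, Real.rpow_add_one hL.ne']
  have e2 : Real.log (γ + x) ^ α = Real.log (γ + x) ^ (α-2) * Real.log (γ + x)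
      * Real.log (γ + x) := by
    rw [← Real.rpow_add_one hL.ne', ← Real.rpow_add_one hL.ne']
    congr 1
    ring
  have e3 : x ^ (p-1) = x ^ (p-2) * x := by
    rw [show p-1 = (p-2)+1 by ring, Real.rpow_add_one hx.ne']
  have e4 : x ^ p = x ^ (p-2) * x * x := by
    rw [← Real.rpow_add_one hx.ne', ← Real.rpow_add_one hx.ne']
    congr 1
    ring
  rw [e1, e2, e3, e4]
  field_simp
  ring

theorem perturbed_power_satisfies_H (p α : ℝ) (hp : p ∈ Set.Ioo (0:ℝ) 1)
    (hα : 0 < α) (γ : ℝ) (hγ : γ = Real.exp (2 * α / (1 - p))) :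
    (StrictMonoOn (PhiPA p α γ) (Set.Ici 0) ∧ PhiPA p α γ 0 = 0) ∧
    (∃ x₀ : ℝ, ∀ x ≥ x₀, (2:ℝ) ^ p * PhiPA p α γ x ≤ PhiPA p α γ (2 * x)) ∧
    (∃ x₁ : ℝ, ∀ x ≥ x₁,
      |x * deriv (deriv (PhiPA p α γ)) x| ≤ deriv (PhiPA p α γ) x) := by
  obtain ⟨hp0, hp1⟩ := hp
  have hγ1 : 1 < γ := by
    have h0 : (0:ℝ) < 2 * α / (1 - p) := div_pos (by linarith) (by linarith)
    rw [hγ]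
    linarith [Real.add_one_le_exp (2 * α / (1 - p))]
  refine ⟨⟨?_, ?_⟩, ?_, ?_⟩
  · -- strict mono
    intro x hx y hy hxy
    have hx' : (0:ℝ) ≤ x := hx
    have hy' : (0:ℝ) ≤ y := hy
    simp only [PhiPA, abs_of_nonneg hx', abs_of_nonneg hy']
    have hLx : 0 < Real.log (γ + x) := Real.log_pos (by linarith)
    have hxp : x ^ p < y ^ p := Real.rpow_lt_rpow hx' hxy hp0
    have hLxy : Real.log (γ + x) ≤ Real.log (γ + y) :=
      Real.log_le_log (by linarith) (by linarith)
    have hLa : (Real.log (γ + x)) ^ α ≤ (Real.log (γ + y)) ^ α :=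
      Real.rpow_le_rpow hLx.le hLxy hα.le
    calc x ^ p * Real.log (γ + x) ^ α
        < y ^ p * Real.log (γ + x) ^ α :=
          mul_lt_mul_of_pos_right hxp (Real.rpow_pos_of_pos hLx α)
      _ ≤ y ^ p * Real.log (γ + y) ^ α :=
          mul_le_mul_of_nonneg_left hLa (Real.rpow_nonneg hy' p)
  · simp [PhiPA, Real.zero_rpow hp0.ne']
  · -- doubling
    refine ⟨0, fun x hx => ?_⟩
    have h2x : (0:ℝ) ≤ 2 * x := by linarith
    simp only [PhiPA, abs_of_nonneg (hx : (0:ℝ) ≤ x), abs_of_nonneg h2x]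
    rw [Real.mul_rpow (by norm_num : (0:ℝ) ≤ 2) hx]
    rw [mul_assoc]
    apply mul_le_mul_of_nonneg_left _ (Real.rpow_nonneg (by norm_num) p)
    have hLx : 0 < Real.log (γ + x) := Real.log_pos (by linarith)
    have hLxy : Real.log (γ + x) ≤ Real.log (γ + 2*x) :=
      Real.log_le_log (by linarith) (by linarith)
    exact mul_le_mul_of_nonneg_left
      (Real.rpow_le_rpow hLx.le hLxy hα.le) (Real.rpow_nonneg hx p)
  · -- second derivative bound
    set K : ℝ := 1 + (2*p*α + α^2) / (p*(2-p)) + α / p^2 with hK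
    have hc : 0 < p*(2-p) := by nlinarith
    have hd1 : 0 ≤ (2*p*α + α^2) / (p*(2-p)) := by positivity
    have hd2 : 0 ≤ α / p^2 := by positivity
    have hK1 : 1 ≤ K := by rw [hK]; linarith
    refine ⟨Real.exp K, fun x hx => ?_⟩
    have hex : 0 < Real.exp K := Real.exp_pos K
    have hx0 : 0 < x := lt_of_lt_of_le hex hx
    have hs : 0 < γ + x := by linarith
    have hxs : x < γ + x := by linarith
    set L : ℝ := Real.log (γ + x) with hLdef
    have hLK : K ≤ L := by
      calc K = Real.log (Real.exp K) := (Real.log_exp K).symm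
        _ ≤ Real.log (γ + x) := Real.log_le_log hex (by linarith)
    have hL1 : 1 ≤ L := le_trans hK1 hLK
    have hL0 : 0 < L := by linarith
    have hKey1 : 2*p*α + α^2 ≤ p*(2-p)*L := by
      have hKge : (2*p*α + α^2) / (p*(2-p)) ≤ K := by rw [hK]; linarith
      calc 2*p*α + α^2 = (2*p*α + α^2) / (p*(2-p)) * (p*(2-p)) := by
            field_simp
            rw [div_self (by linarith : (2:ℝ) - p ≠ 0)]
        _ ≤ K * (p*(2-p)) := mul_le_mul_of_nonneg_right hKge hc.le
        _ ≤ L * (p*(2-p)) := mul_le_mul_of_nonneg_right hLK hc.le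
        _ = p*(2-p)*L := by ring
    have hKey2 : α ≤ p^2*L := by
      have hp2 : (0:ℝ) < p^2 := by positivity
      have hKge : α / p^2 ≤ K := by rw [hK]; linarith
      calc α = α / p^2 * p^2 := by field_simp
        _ ≤ K * p^2 := mul_le_mul_of_nonneg_right hKge hp2.le
        _ ≤ L * p^2 := mul_le_mul_of_nonneg_right hLK hp2.le
        _ = p^2*L := by ring
    have key := key_ineq p α x (γ + x) L hp0 hp1 hα hx0 hxs hL1 hKey1 hKey2
    rw [deriv_phiPA_eq p α γ hγ1 hx0, deriv2_phiPA_eq p α γ hγ1 hx0]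
    have ht : 0 < x ^ (p-1) := Real.rpow_pos_of_pos hx0 (p-1)
    have hB : 0 < L ^ (α-2) := Real.rpow_pos_of_pos hL0 (α-2)
    rw [← hLdef]
    have hsimp : x * (x ^ (p-1) * L ^ (α-2) *
        (p*(p-1)*L^2*(γ + x)^2 + 2*p*α*x*L*(γ + x) + α*(α-1)*x^2 - α*x^2*L)
          / (x * (γ + x)^2))
        = x ^ (p-1) * L ^ (α-2) *
        (p*(p-1)*L^2*(γ + x)^2 + 2*p*α*x*L*(γ + x) + α*(α-1)*x^2 - α*x^2*L)
          / (γ + x)^2 := by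
      field_simp
    rw [hsimp, abs_div, abs_of_pos (by positivity : (0:ℝ) < (γ + x)^2)]
    apply div_le_div_of_nonneg_right ?_ (by positivity : (0:ℝ) ≤ (γ + x)^2)
    have habs : |x ^ (p-1) * L ^ (α-2) *
        (p*(p-1)*L^2*(γ + x)^2 + 2*p*α*x*L*(γ + x) + α*(α-1)*x^2 - α*x^2*L)|
        = x ^ (p-1) * L ^ (α-2) *
          |p*(p-1)*L^2*(γ + x)^2 + 2*p*α*x*L*(γ + x) + α*(α-1)*x^2 - α*x^2*L| := by
      rw [abs_mul, abs_mul, abs_of_pos ht, abs_of_pos hB]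
    rw [habs]
    exact mul_le_mul_of_nonneg_left key (by positivity)
end
end
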